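/- Let q be a real number with q ≥ 3, let t > 1 and z > 0, and assume that if t ≥ t₃(q) then either 0 < z < z_c^−(t,q) or z > z_c^+(t,q). Then the second iterate R²_{z,t,q} has exactly one real fixed point; this fixed point lies in (0,∞) and is an attracting fixed point of the first iterate R_{z,t,q} (i.e., R_{z,t,q}(w) = w and |R'_{z,t,q}(w)| < 1). -/

import Mathlib

noncomputable section

/-- The renormalization map `R_{z,t,q}(w) = z·((t + w + (q−2)tw)/(1 + (q−1)tw))²`,
viewed as a function of the real variable `w`. -/
def Rmap (z t q : ℝ) (w : ℝ) : ℝ :=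
  z * ((t + w + (q - 2) * t * w) / (1 + (q - 1) * t * w)) ^ 2

/-- The second iterate `R²_{z,t,q}(w) = R_{z,t,q}(R_{z,t,q}(w))`. -/
def Rmap2 (z t q : ℝ) (w : ℝ) : ℝ := Rmap z t q (Rmap z t q w)

/-- `t₃(q) = 3(3q − 6 + √(9q² − 32q + 32))/(2(q − 1))`. -/
def tThree (q : ℝ) : ℝ :=
  3 * (3 * q - 6 + Real.sqrt (9 * q ^ 2 - 32 * q + 32)) / (2 * (q - 1))

/-- `z_c^+(t,q)`. -/
def zcPlus (q t : ℝ) : ℝ :=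
  ((-3 - 6 * (q - 2) * t - 3 * (2 + (q - 2) * q) * t ^ 2 - 6 * (q - 2) * (q - 1) * t ^ 3
      + (q - 1) ^ 2 * t ^ 4)
    + Real.sqrt ((t - 1) ^ 3 * (1 - t + q * t) ^ 3 * (-9 + 18 * t - 9 * q * t - t ^ 2 + q * t ^ 2)))
    / (8 * t * (1 - 2 * t + q * t) ^ 3)

/-- `z_c^−(t,q)`. -/
def zcMinus (q t : ℝ) : ℝ :=
  ((-3 - 6 * (q - 2) * t - 3 * (2 + (q - 2) * q) * t ^ 2 - 6 * (q - 2) * (q - 1) * t ^ 3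
      + (q - 1) ^ 2 * t ^ 4)
    - Real.sqrt ((t - 1) ^ 3 * (1 - t + q * t) ^ 3 * (-9 + 18 * t - 9 * q * t - t ^ 2 + q * t ^ 2)))
    / (8 * t * (1 - 2 * t + q * t) ^ 3)

def Lpoly (t q : ℝ) : ℝ :=
  3+6*(q-2)*t+3*(2+(q-2)*q)*t^2+6*(q-2)*(q-1)*t^3-(q-1)^2*t^4

def Phi (z t q : ℝ) : ℝ := 4*((q-1)*t) + Lpoly t q * z + 4*z^2*t*(1+(q-2)*t)^3


set_option maxHeartbeats 1000000 in
lemma phi_pos (q t z : ℝ) (hq : 3 ≤ q) (ht : 1 < t) (hz : 0 < z)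
    (hreg : tThree q ≤ t → z < zcMinus q t ∨ zcPlus q t < z) : 0 < Phi z t q := by
  have hq1 : (0:ℝ) < q - 1 := by linarith
  have ht0 : (0:ℝ) < t := by linarith
  have ha : (0:ℝ) < 1+(q-2)*t := by nlinarith
  have hE : (0:ℝ) < 9*q^2-32*q+32 := by nlinarith [sq_nonneg (3*q-16/3)]
  have hs0 : 0 ≤ Real.sqrt (9*q^2-32*q+32) := Real.sqrt_nonneg _
  have hs2 : Real.sqrt (9*q^2-32*q+32)^2 = 9*q^2-32*q+32 := Real.sq_sqrt hE.le
  set s := Real.sqrt (9*q^2-32*q+32) with hs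
  have ht3 : tThree q = (9*(q-2)+3*s)/(2*(q-1)) := by
    rw [tThree, ← hs]; ring
  set D := (t - 1) ^ 3 * (1 - t + q * t) ^ 3 * (-9 + 18 * t - 9 * q * t - t ^ 2 + q * t ^ 2)
    with hDdef
  have hLD : Lpoly t q^2 - 64*(t*(1+(q-2)*t)^3)*((q-1)*t) = D := by
    rw [hDdef]; unfold Lpoly; ring
  have h4u : 4*(q-1)*(-9 + 18 * t - 9 * q * t - t ^ 2 + q * t ^ 2)
      = (2*(q-1)*t-9*(q-2))^2 - 9*s^2 := by
    rw [hs2]; ring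
  suffices h : D < (8*(t*(1+(q-2)*t)^3)*z + Lpoly t q)^2 by
    have hexp : 16*(t*(1+(q-2)*t)^3) * Phi z t q
        = (8*(t*(1+(q-2)*t)^3)*z + Lpoly t q)^2
          - (Lpoly t q^2 - 64*(t*(1+(q-2)*t)^3)*((q-1)*t)) := by
      unfold Phi; ring
    rw [hLD] at hexp
    by_contra hno
    push_neg at hno
    have hle : 16*(t*(1+(q-2)*t)^3) * Phi z t q ≤ 0 :=
      mul_nonpos_of_nonneg_of_nonpos (by positivity) hno
    linarith
  by_cases htt : tThree q ≤ t
  · -- t ≥ t₃ : D ≥ 0 and z lies outside [zc⁻, zc⁺]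
    have hX : 3*s ≤ 2*(q-1)*t-9*(q-2) := by
      rw [ht3, div_le_iff₀ (by linarith : (0:ℝ) < 2*(q-1))] at htt
      linarith
    have hX2 : (3*s)^2 ≤ (2*(q-1)*t-9*(q-2))^2 :=
      pow_le_pow_left₀ (by positivity) hX 2
    have hu : 0 ≤ -9 + 18 * t - 9 * q * t - t ^ 2 + q * t ^ 2 := by nlinarith [h4u, hX2]
    have hD0 : 0 ≤ D := by
      rw [hDdef]
      exact mul_nonneg (mul_nonneg (pow_pos (by linarith : (0:ℝ) < t-1) 3).le
        (pow_pos (by nlinarith : (0:ℝ) < 1-t+q*t) 3).le) hu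
    have hr0 : 0 ≤ Real.sqrt D := Real.sqrt_nonneg _
    have hr2 : Real.sqrt D^2 = D := Real.sq_sqrt hD0
    set r := Real.sqrt D with hr
    have hden : (0:ℝ) < 8*t*(1-2*t+q*t)^3 := by
      have h2 : (0:ℝ) < 1-2*t+q*t := by nlinarith
      positivity
    have hdeq : 8*t*(1-2*t+q*t)^3 = 8*(t*(1+(q-2)*t)^3) := by ring
    rcases hreg htt with hlt | hgt
    · have hzm : zcMinus q t = (-Lpoly t q - r)/(8*t*(1-2*t+q*t)^3) := by
        unfold zcMinus; rw [← hDdef, ← hr]; unfold Lpoly; ring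
      rw [hzm, lt_div_iff₀ hden] at hlt
      have heq : z*(8*t*(1-2*t+q*t)^3) = 8*(t*(1+(q-2)*t)^3)*z := by ring
      have h1 : 0 < -(8*(t*(1+(q-2)*t)^3)*z + Lpoly t q) - r := by linarith
      have h2 : 0 < -(8*(t*(1+(q-2)*t)^3)*z + Lpoly t q) + r := by linarith
      nlinarith [mul_pos h1 h2, hr2]
    · have hzp : zcPlus q t = (-Lpoly t q + r)/(8*t*(1-2*t+q*t)^3) := by
        unfold zcPlus; rw [← hDdef, ← hr]; unfold Lpoly; ring
      rw [hzp, div_lt_iff₀ hden] at hgt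
      have heq : z*(8*t*(1-2*t+q*t)^3) = 8*(t*(1+(q-2)*t)^3)*z := by ring
      have h1 : 0 < (8*(t*(1+(q-2)*t)^3)*z + Lpoly t q) - r := by linarith
      have h2 : 0 < (8*(t*(1+(q-2)*t)^3)*z + Lpoly t q) + r := by linarith
      nlinarith [mul_pos h1 h2, hr2]
  · -- t < t₃ : D < 0
    push_neg at htt
    rw [ht3, lt_div_iff₀ (by linarith : (0:ℝ) < 2*(q-1))] at htt
    have hXlt : 2*(q-1)*t-9*(q-2) < 3*s := by linarith
    have hX2 : (2*(q-1)*t-9*(q-2))^2 < 9*s^2 := by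
      by_cases hX : 0 ≤ 2*(q-1)*t-9*(q-2)
      · have := pow_lt_pow_left₀ hXlt hX (by norm_num : (2:ℕ) ≠ 0)
        nlinarith [this]
      · push_neg at hX
        have h1 : 16-7*q < 2*(q-1)*t-9*(q-2) := by nlinarith
        have h2 : -(2*(q-1)*t-9*(q-2)) < 7*q-16 := by linarith
        have h3 : (-(2*(q-1)*t-9*(q-2)))^2 < (7*q-16)^2 :=
          pow_lt_pow_left₀ h2 (by linarith) (by norm_num : (2:ℕ) ≠ 0)
        nlinarith [h3, hs2, sq_nonneg (q-1)]
    have hu : -9 + 18 * t - 9 * q * t - t ^ 2 + q * t ^ 2 < 0 := by nlinarith [h4u]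
    have hD0 : D < 0 := by
      rw [hDdef]
      have h1 : (0:ℝ) < (t-1)^3 * (1-t+q*t)^3 :=
        mul_pos (pow_pos (by linarith) 3) (pow_pos (by nlinarith) 3)
      nlinarith [mul_pos h1 (neg_pos.mpr hu)]
    exact lt_of_lt_of_le hD0 (sq_nonneg _)

def Cone (z t q : ℝ) : ℝ :=
  2*((q-1)*t) + (1 + 2*(q-2)*t + q^2*t^2 + 4*(q-1)*(q-2)*t^3 - (q-1)^2*t^4)*z
    + 2*z^2*t*(1+(q-2)*t)^3

def Hpoly (z t q x : ℝ) : ℝ :=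
  (z*(1+(q-2)*t)^2+(q-1)*t)^2*x^2 + Cone z t q * x + (1+z*t*(1+(q-2)*t))^2

lemma hpoly_eq (z t q x : ℝ) :
    Hpoly z t q x
      = ((z*(1+(q-2)*t)^2+(q-1)*t)*x - (1+z*t*(1+(q-2)*t)))^2 + Phi z t q * x := by
  unfold Hpoly Cone Phi Lpoly; ring

lemma hpoly_pos (z t q x : ℝ) (hphi : 0 < Phi z t q) (hx : 0 < x) :
    0 < Hpoly z t q x := by
  rw [hpoly_eq]
  have := mul_pos hphi hx
  nlinarith [sq_nonneg ((z*(1+(q-2)*t)^2+(q-1)*t)*x - (1+z*t*(1+(q-2)*t)))]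

set_option maxHeartbeats 1000000 in
lemma qd_identity (z t q w : ℝ)
    (hfix : z*(t+w+(q-2)*t*w)^2 = w*(1+(q-1)*t*w)^2) :
    ((1+(q-1)*t*w)*(t+(1+(q-2)*t)*w) - 2*((t-1)*(1+(q-1)*t))*w)
        * ((1+(q-1)*t*w)^2 + (q-1)*t*(z*(t+(1+(q-2)*t)*w)^2))^2
      = Hpoly z t q w * ((1+(q-1)*t*w)^3 * (t+(1+(q-2)*t)*w)) := by
  unfold Hpoly Cone
  linear_combination (-(2 - 4*t - 4*t*w + 2*t*q + 4*t*q*w + 2*t^2 + 8*t^2*w + 2*t^2*w^2 - 2*t^2*q - 12*t^2*q*w - 4*t^2*q*w^2 + 4*t^2*q^2*w + 2*t^2*q^2*w^2 - 4*t^3*w - 4*t^3*w^2 + 8*t^3*q*w + 10*t^3*q*w^2 - 4*t^3*q^2*w - 8*t^3*q^2*w^2 + 2*t^3*q^3*w^2 + 2*t^4*w^2 - 6*t^4*q*w^2 + 6*t^4*q^2*w^2 - 2*t^4*q^3*w^2 + z*w + z*t - 6*z*t*w - 3*z*t*w^2 + 3*z*t*q*w + 3*z*t*q*w^2 - 4*z*t^2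 + 9*z*t^2*w + 18*z*t^2*w^2 + 2*z*t^2*q - 9*z*t^2*q*w - 27*z*t^2*q*w^2 + 3*z*t^2*q^2*w + 9*z*t^2*q^2*w^2 + 4*z*t^3 + 4*z*t^3*w - 40*z*t^3*w^2 - 4*z*t^3*q - 6*z*t^3*q*w + 80*z*t^3*q*w^2 + z*t^3*q^2 - 49*z*t^3*q^2*w^2 + z*t^3*q^3*w + 9*z*t^3*q^3*w^2 - 17*z*t^4*w + 40*z*t^4*w^2 + 34*z*t^4*q*w - 100*z*t^4*q*w^2 - 20*z*t^4*q^2*w + 86*z*t^4*q^2*w^2 + 3*z*t^4*q^3*w - 29*z*t^4*q^3*w^2 + 3*z*t^4*q^4*w^2 - z*t^5 + 10*z*t^5*w - 17*z*t^5*w^2 + 2*z*t^5*q - 25*z*t^5*q*w + 51*z*t^5*q*w^2 - z*t^5*q^2 + 20*z*t^5*q^2*w - 55*z*t^5*q^2*w^2 - 5*z*t^5*q^3*w + 25*z*t^5*q^3*w^2 - 4*z*t^5*q^4*w^2 - z*t^6*w + 2*z*t^6*w^2 + 3*z*t^6*q*w - 7*z*t^6*q*w^2 - 3*z*t^6*q^2*w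 + 9*z*t^6*q^2*w^2 + z*t^6*q^3*w - 5*z*t^6*q^3*w^2 + z*t^6*q^4*w^2)) * hfix

set_option maxHeartbeats 1000000 in
lemma two_cycle_hpoly (z t q p u : ℝ)
    (e1 : z*(t+p+(q-2)*t*p)^2 = u*(1+(q-1)*t*p)^2)
    (e2 : z*(t+u+(q-2)*t*u)^2 = p*(1+(q-1)*t*u)^2) :
    Hpoly z t q p * ((u - p)*(1+(q-1)*t*p)^2) = 0 := by
  unfold Hpoly Cone
  linear_combination ((1+(q-1)*t*p)^2)^2 * e2 + (-1 + 4*t*p - 4*t*q*p - t^2*p*u - 5*t^2*p^2 + 2*t^2*q*p*u + 10*t^2*q*p^2 - t^2*q^2*p*u - 5*t^2*q^2*p^2 + 2*t^3*p^2*u + 2*t^3*p^3 - 6*t^3*q*p^2*u - 6*t^3*q*p^3 + 6*t^3*q^2*p^2*u + 6*t^3*q^2*p^3 - 2*t^3*q^3*p^2*u - 2*t^3*q^3*p^3 - t^4*p^3*u + 4*t^4*q*p^3*u - 6*t^4*q^2*p^3*u + 4*t^4*q^3*p^3*u - t^4*q^4*p^3*u + z*u - z*p - 4*z*t*u + 4*z*t*p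 - 2*z*t*p*u + 2*z*t*p^2 + 2*z*t*q*u - 2*z*t*q*p + 2*z*t*q*p*u - 2*z*t*q*p^2 + 4*z*t^2*u - 4*z*t^2*p + 8*z*t^2*p*u - 8*z*t^2*p^2 + z*t^2*p^2*u - z*t^2*p^3 - 4*z*t^2*q*u + 4*z*t^2*q*p - 12*z*t^2*q*p*u + 12*z*t^2*q*p^2 - 2*z*t^2*q*p^2*u + 2*z*t^2*q*p^3 + z*t^2*q^2*u - z*t^2*q^2*p + 4*z*t^2*q^2*p*u - 4*z*t^2*q^2*p^2 + z*t^2*q^2*p^2*u - z*t^2*q^2*p^3 - 8*z*t^3*p*u + 8*z*t^3*p^2 - 4*z*t^3*p^2*u + 4*z*t^3*p^3 + 16*z*t^3*q*p*u - 16*z*t^3*q*p^2 + 10*z*t^3*q*p^2*u - 10*z*t^3*q*p^3 - 10*z*t^3*q^2*p*u + 10*z*t^3*q^2*p^2 - 8*z*t^3*q^2*p^2*u + 8*z*t^3*q^2*p^3 + 2*z*t^3*q^3*p*u - 2*z*t^3*q^3*p^2 + 2*z*t^3*q^3*p^2*u - 2*z*t^3*q^3*p^3 + 4*z*t^4*p^2*u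 - 4*z*t^4*p^3 - 12*z*t^4*q*p^2*u + 12*z*t^4*q*p^3 + 13*z*t^4*q^2*p^2*u - 13*z*t^4*q^2*p^3 - 6*z*t^4*q^3*p^2*u + 6*z*t^4*q^3*p^3 + z*t^4*q^4*p^2*u - z*t^4*q^4*p^3) * e1

lemma rmap_pos (z t q x : ℝ) (hq : 3 ≤ q) (ht : 1 < t) (hz : 0 < z) (hx : 0 ≤ x) :
    0 < Rmap z t q x := by
  have hnum : 0 < t + x + (q-2)*t*x := by nlinarith [mul_nonneg (mul_nonneg (show (0:ℝ) ≤ q-2 by linarith) (show (0:ℝ) ≤ t by linarith)) (show (0:ℝ) ≤ x by linarith)]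
  have hden : 0 < 1 + (q-1)*t*x := by nlinarith [mul_nonneg (mul_nonneg (show (0:ℝ) ≤ q-1 by linarith) (show (0:ℝ) ≤ t by linarith)) (show (0:ℝ) ≤ x by linarith)]
  have h := div_pos hnum hden
  exact mul_pos hz (pow_pos h 2)

lemma rmap_nonneg (z t q x : ℝ) (hz : 0 < z) : 0 ≤ Rmap z t q x :=
  mul_nonneg hz.le (sq_nonneg _)

lemma rmap_anti (z t q : ℝ) (hq : 3 ≤ q) (ht : 1 < t) (hz : 0 < z)
    {x y : ℝ} (hx : 0 < x) (hxy : x < y) : Rmap z t q y < Rmap z t q x := by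
  have hy : 0 < y := hx.trans hxy
  have hnx : 0 < t + x + (q-2)*t*x := by nlinarith [mul_nonneg (mul_nonneg (show (0:ℝ) ≤ q-2 by linarith) (show (0:ℝ) ≤ t by linarith)) (show (0:ℝ) ≤ x by linarith)]
  have hny : 0 < t + y + (q-2)*t*y := by nlinarith [mul_nonneg (mul_nonneg (show (0:ℝ) ≤ q-2 by linarith) (show (0:ℝ) ≤ t by linarith)) (show (0:ℝ) ≤ y by linarith)]
  have hdx : 0 < 1 + (q-1)*t*x := by nlinarith [mul_nonneg (mul_nonneg (show (0:ℝ) ≤ q-1 by linarith) (show (0:ℝ) ≤ t by linarith)) (show (0:ℝ) ≤ x by linarith)]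
  have hdy : 0 < 1 + (q-1)*t*y := by nlinarith [mul_nonneg (mul_nonneg (show (0:ℝ) ≤ q-1 by linarith) (show (0:ℝ) ≤ t by linarith)) (show (0:ℝ) ≤ y by linarith)]
  have hgy : 0 < (t + y + (q-2)*t*y)/(1 + (q-1)*t*y) := div_pos hny hdy
  have hlt : (t + y + (q-2)*t*y)/(1 + (q-1)*t*y) < (t + x + (q-2)*t*x)/(1 + (q-1)*t*x) := by
    rw [div_lt_div_iff₀ hdy hdx]
    nlinarith [mul_pos (mul_pos (show (0:ℝ) < t-1 by linarith)
      (show (0:ℝ) < 1+(q-1)*t by nlinarith)) (show (0:ℝ) < y - x by linarith)]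
  exact mul_lt_mul_of_pos_left (pow_lt_pow_left₀ hlt hgy.le (by norm_num)) hz

lemma rmap_eq_of_poly (z t q w : ℝ) (hq : 3 ≤ q) (ht : 1 < t) (hw : 0 < w)
    (hfix : z*(t+w+(q-2)*t*w)^2 = w*(1+(q-1)*t*w)^2) : Rmap z t q w = w := by
  have hden : (0:ℝ) < 1+(q-1)*t*w := by nlinarith [mul_nonneg (mul_nonneg (show (0:ℝ) ≤ q-1 by linarith) (show (0:ℝ) ≤ t by linarith)) hw.le]
  unfold Rmap
  rw [div_pow, mul_div_assoc', div_eq_iff (ne_of_gt (pow_pos hden 2))]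
  linear_combination hfix

lemma poly_of_rmap_eq (z t q w u : ℝ) (hq : 3 ≤ q) (ht : 1 < t) (hw : 0 < w)
    (h : Rmap z t q w = u) : z*(t+w+(q-2)*t*w)^2 = u*(1+(q-1)*t*w)^2 := by
  have hden : (0:ℝ) < 1+(q-1)*t*w := by nlinarith [mul_nonneg (mul_nonneg (show (0:ℝ) ≤ q-1 by linarith) (show (0:ℝ) ≤ t by linarith)) hw.le]
  unfold Rmap at h
  rw [div_pow, mul_div_assoc', div_eq_iff (ne_of_gt (pow_pos hden 2))] at h
  linear_combination h

set_option maxHeartbeats 1000000 in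
/-- **Lemma (region 𝓡₁: unique attracting fixed point).**
Let `q ≥ 3` be real, `t > 1`, `z > 0`, and suppose that whenever `t ≥ t₃(q)` one has
`z < z_c^−(t,q)` or `z > z_c^+(t,q)`.  Then the second iterate `R²_{z,t,q}` has exactly
one real fixed point; it lies in `(0,∞)` and is an attracting fixed point of the first
iterate `R_{z,t,q}`. -/
theorem region_one_unique_attracting_fixed_point
    (q : ℝ) (hq : 3 ≤ q) (t : ℝ) (ht : 1 < t) (z : ℝ) (hz : 0 < z)
    (hreg : tThree q ≤ t → z < zcMinus q t ∨ zcPlus q t < z) :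
    ∃ w : ℝ, 0 < w ∧ Rmap2 z t q w = w ∧ Rmap z t q w = w ∧
      |deriv (Rmap z t q) w| < 1 ∧
      ∀ w' : ℝ, Rmap2 z t q w' = w' → w' = w := by
  have hphi : 0 < Phi z t q := phi_pos q t z hq ht hz hreg
  have ht0 : (0:ℝ) < t := by linarith
  -- existence of a fixed point of Rmap via IVT
  set F : ℝ → ℝ := fun w => z*(t+w+(q-2)*t*w)^2 - w*(1+(q-1)*t*w)^2 with hF
  have hcont : Continuous F := by fun_prop
  have hM : 0 < z*t^2 := by positivity
  have hF0 : F 0 = z*t^2 := by simp only [hF]; ring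
  have hc : 0 < (t-1)*(1+(q-1)*t) :=
    mul_pos (show (0:ℝ) < t-1 by linarith)
      (by nlinarith [mul_pos (show (0:ℝ) < q-1 by linarith) ht0] : (0:ℝ) < 1+(q-1)*t)
  have hFM : F (z*t^2) < 0 := by
    simp only [hF]
    have h1 : t + z*t^2 + (q-2)*t*(z*t^2) < t*(1 + (q-1)*t*(z*t^2)) := by
      nlinarith [mul_pos hM hc]
    have h1p : 0 < t + z*t^2 + (q-2)*t*(z*t^2) := by
      nlinarith [mul_nonneg (mul_nonneg (show (0:ℝ) ≤ q-2 by linarith) ht0.le) hM.le]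
    have h2 : (t + z*t^2 + (q-2)*t*(z*t^2))^2 < (t*(1 + (q-1)*t*(z*t^2)))^2 :=
      pow_lt_pow_left₀ h1 h1p.le (by norm_num)
    nlinarith [mul_pos hz (sub_pos.mpr h2)]
  have hmem : (0:ℝ) ∈ Set.Icc (F (z*t^2)) (F 0) := ⟨hFM.le, by rw [hF0]; exact hM.le⟩
  obtain ⟨w, hwmem, hwF⟩ := intermediate_value_Icc' hM.le hcont.continuousOn hmem
  have hw0 : 0 < w := by
    rcases hwmem.1.lt_or_eq with h | h
    · exact h
    · exfalso; rw [← h, hF0] at hwF; exact absurd hwF (ne_of_gt hM)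
  have hfixp : z*(t+w+(q-2)*t*w)^2 = w*(1+(q-1)*t*w)^2 := by
    have := hwF; simp only [hF] at this; linarith
  have hRfix : Rmap z t q w = w := rmap_eq_of_poly z t q w hq ht hw0 hfixp
  have hR2fix : Rmap2 z t q w = w := by unfold Rmap2; rw [hRfix, hRfix]
  -- positivity facts at w
  have hden : (0:ℝ) < 1+(q-1)*t*w := by
    nlinarith [mul_nonneg (mul_nonneg (show (0:ℝ) ≤ q-1 by linarith) ht0.le) hw0.le]
  have hA : (0:ℝ) < t+(1+(q-2)*t)*w := by
    nlinarith [mul_nonneg (mul_nonneg (show (0:ℝ) ≤ q-2 by linarith) ht0.le) hw0.le]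
  -- derivative computation
  have h1 : HasDerivAt (fun x : ℝ => t + x + (q-2)*t*x) (1 + (q-2)*t) w := by
    have h := ((hasDerivAt_id w).const_add t).add ((hasDerivAt_id w).const_mul ((q-2)*t))
    exact h.congr_deriv (by ring)
  have h2 : HasDerivAt (fun x : ℝ => 1 + (q-1)*t*x) ((q-1)*t) w := by
    simpa using ((hasDerivAt_id w).const_mul ((q-1)*t)).const_add 1
  have hdiv := (h1.div h2 (ne_of_gt hden)).pow 2
  have hmul := hdiv.const_mul z
  have hRd : HasDerivAt (Rmap z t q) (z * (↑2 * ((t + w + (q - 2) * t * w) / (1 + (q - 1) * t * w)) ^ (2-1) *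
      (((1 + (q-2)*t) * (1 + (q - 1) * t * w) - (t + w + (q - 2) * t * w) * ((q-1)*t)) / (1 + (q - 1) * t * w)^2))) w := hmul
  have hval : deriv (Rmap z t q) w
      = -((2*z*((t-1)*(1+(q-1)*t))*(t+(1+(q-2)*t)*w)) / (1+(q-1)*t*w)^3) := by
    rw [hRd.deriv]
    rw [div_pow]
    field_simp
    ring
  -- Qd positivity from Hpoly positivity
  have hHw : 0 < Hpoly z t q w := hpoly_pos _ _ _ _ hphi hw0
  have hqd : 0 < (1+(q-1)*t*w)*(t+(1+(q-2)*t)*w) - 2*((t-1)*(1+(q-1)*t))*w := by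
    have hid := qd_identity z t q w hfixp
    by_contra hle
    push_neg at hle
    have hnp : ((1+(q-1)*t*w)*(t+(1+(q-2)*t)*w) - 2*((t-1)*(1+(q-1)*t))*w)
        * ((1+(q-1)*t*w)^2 + (q-1)*t*(z*(t+(1+(q-2)*t)*w)^2))^2 ≤ 0 :=
      mul_nonpos_of_nonpos_of_nonneg hle (sq_nonneg _)
    have hpos : 0 < Hpoly z t q w * ((1+(q-1)*t*w)^3 * (t+(1+(q-2)*t)*w)) :=
      mul_pos hHw (mul_pos (pow_pos hden 3) hA)
    rw [hid] at hnp
    linarith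
  -- |deriv| < 1
  have hX : 0 < 2*z*((t-1)*(1+(q-1)*t))*(t+(1+(q-2)*t)*w) := by positivity
  have habs : |deriv (Rmap z t q) w| < 1 := by
    rw [hval, abs_neg, abs_div, abs_of_pos hX, abs_of_pos (pow_pos hden 3),
      div_lt_one (pow_pos hden 3)]
    have e1 : (2*z*((t-1)*(1+(q-1)*t))*(t+(1+(q-2)*t)*w)) * (t+(1+(q-2)*t)*w)^2
        = 2*((t-1)*(1+(q-1)*t))*(t+(1+(q-2)*t)*w)*(w*(1+(q-1)*t*w)^2) := by
      linear_combination (2*((t-1)*(1+(q-1)*t))*(t+(1+(q-2)*t)*w)) * hfixp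
    have e2 : 2*((t-1)*(1+(q-1)*t))*(t+(1+(q-2)*t)*w)*(w*(1+(q-1)*t*w)^2)
        < (1+(q-1)*t*w)^3 * (t+(1+(q-2)*t)*w)^2 := by
      nlinarith [mul_pos (mul_pos (pow_pos hden 2) hA) hqd]
    have e3 : (2*z*((t-1)*(1+(q-1)*t))*(t+(1+(q-2)*t)*w)) * (t+(1+(q-2)*t)*w)^2
        < (1+(q-1)*t*w)^3 * (t+(1+(q-2)*t)*w)^2 := by rw [e1]; exact e2
    exact lt_of_mul_lt_mul_right e3 (pow_pos hA 2).le
  refine ⟨w, hw0, hR2fix, hRfix, habs, ?_⟩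
  -- uniqueness
  intro w' hw2'
  have hRR : Rmap z t q (Rmap z t q w') = w' := hw2'
  have hw'pos : 0 < w' := by
    have h0 : 0 ≤ Rmap z t q w' := rmap_nonneg _ _ _ _ hz
    have := rmap_pos z t q (Rmap z t q w') hq ht hz h0
    rw [hRR] at this; exact this
  have hupos : 0 < Rmap z t q w' := rmap_pos z t q w' hq ht hz hw'pos.le
  set u := Rmap z t q w' with hu
  have e1 : z*(t+w'+(q-2)*t*w')^2 = u*(1+(q-1)*t*w')^2 :=
    poly_of_rmap_eq z t q w' u hq ht hw'pos rfl
  have e2 : z*(t+u+(q-2)*t*u)^2 = w'*(1+(q-1)*t*u)^2 :=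
    poly_of_rmap_eq z t q u w' hq ht hupos hRR
  by_cases hcase : u = w'
  · have hfix' : Rmap z t q w' = w' := by rw [← hu]; exact hcase
    rcases lt_trichotomy w' w with hlt | heq | hgt
    · exfalso
      have := rmap_anti z t q hq ht hz hw'pos hlt
      rw [hRfix, hfix'] at this; linarith
    · exact heq
    · exfalso
      have := rmap_anti z t q hq ht hz hw0 hgt
      rw [hRfix, hfix'] at this; linarith
  · exfalso
    have hzero := two_cycle_hpoly z t q w' u e1 e2
    have hden' : (0:ℝ) < 1+(q-1)*t*w' := by
      nlinarith [mul_nonneg (mul_nonneg (show (0:ℝ) ≤ q-1 by linarith) ht0.le) hw'pos.le]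
    have hne : (u - w')*(1+(q-1)*t*w')^2 ≠ 0 :=
      mul_ne_zero (sub_ne_zero.mpr hcase) (ne_of_gt (pow_pos hden' 2))
    rcases mul_eq_zero.mp hzero with h | h
    · exact absurd h (ne_of_gt (hpoly_pos _ _ _ _ hphi hw'pos))
    · exact hne h
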